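/- Under conjugation by the affine map x ↦ Bx ⊕ c (B ∈ GL_n(F_2), c ∈ F_2^n), the set W of multilinear polynomials over Z_{2^k} with zero constant term and α-coefficient divisible by 2^{|α|-1} is preserved, up to discarding the constant term: if p ∈ W then p(Bx ⊕ c), reduced to multilinear form, has all nonconstant degree-t coefficients divisible by 2^{t-1}. -/

import Mathlib

open scoped Matrix

/-- Evaluation of a multilinear polynomial over `ℤ_{2^k}` (coefficients indexed
by subsets `α ⊆ [n]`) at a bit string `b ∈ {0,1}ⁿ`, using `x_j² = x_j`. -/
noncomputable def evalP (n k : ℕ) (p : Finset (Fin n) → ZMod (2 ^ k))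
    (b : Fin n → ZMod 2) : ZMod (2 ^ k) :=
  ∑ α : Finset (Fin n), p α * ∏ j ∈ α, ((b j).val : ZMod (2 ^ k))

namespace SubstW

variable {n : ℕ}

/-- Iterated finite difference operator along a list of coordinates. -/
def Ddiff {R : Type} [CommRing R] :
    List (Fin n) → ((Fin n → ZMod 2) → R) → ((Fin n → ZMod 2) → R)
  | [], F => F
  | i :: l, F =>
      Ddiff l (fun b => F (Function.update b i 1) - F (Function.update b i 0))

lemma Ddiff_congr {R : Type} [CommRing R] :
    ∀ (l : List (Fin n)) {F G : (Fin n → ZMod 2) → R}, (∀ b, F b = G b) →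
      ∀ b, Ddiff l F b = Ddiff l G b
  | [], F, G, h, b => h b
  | i :: l, F, G, h, b => by
      simp only [Ddiff]
      exact Ddiff_congr l (fun b => by rw [h, h]) b

lemma Ddiff_zero {R : Type} [CommRing R] :
    ∀ (l : List (Fin n)) (b), Ddiff l (fun _ => (0 : R)) b = 0
  | [], b => rfl
  | i :: l, b => by
      simp only [Ddiff, sub_zero]
      exact Ddiff_zero l b

lemma Ddiff_sum {R : Type} [CommRing R] {ι : Type} :
    ∀ (l : List (Fin n)) (s : Finset ι) (f : ι → (Fin n → ZMod 2) → R) (b),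
      Ddiff l (fun b => ∑ γ ∈ s, f γ b) b = ∑ γ ∈ s, Ddiff l (f γ) b
  | [], s, f, b => rfl
  | i :: l, s, f, b => by
      simp only [Ddiff]
      rw [Ddiff_congr l (G := fun b => ∑ γ ∈ s,
            (f γ (Function.update b i 1) - f γ (Function.update b i 0)))
          (fun b => by rw [← Finset.sum_sub_distrib])]
      exact Ddiff_sum l s _ b

lemma Ddiff_const_mul {R : Type} [CommRing R] :
    ∀ (l : List (Fin n)) (c : R) (F : (Fin n → ZMod 2) → R) (b),
      Ddiff l (fun b => c * F b) b = c * Ddiff l F b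
  | [], c, F, b => rfl
  | i :: l, c, F, b => by
      simp only [Ddiff]
      rw [Ddiff_congr l (G := fun b => c * (F (Function.update b i 1) -
            F (Function.update b i 0))) (fun b => by ring)]
      exact Ddiff_const_mul l c _ b

lemma Ddiff_sub {R : Type} [CommRing R] :
    ∀ (l : List (Fin n)) (F G : (Fin n → ZMod 2) → R) (b),
      Ddiff l (fun b => F b - G b) b = Ddiff l F b - Ddiff l G b
  | [], F, G, b => rfl
  | i :: l, F, G, b => by
      simp only [Ddiff]
      rw [Ddiff_congr l (G := fun b =>
            (F (Function.update b i 1) - F (Function.update b i 0)) -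
            (G (Function.update b i 1) - G (Function.update b i 0)))
          (fun b => by ring)]
      exact Ddiff_sub l _ _ b

lemma Ddiff_cast {R : Type} [CommRing R] :
    ∀ (l : List (Fin n)) (F : (Fin n → ZMod 2) → ℤ) (b),
      Ddiff l (fun b => ((F b : ℤ) : R)) b = ((Ddiff l F b : ℤ) : R)
  | [], F, b => rfl
  | i :: l, F, b => by
      simp only [Ddiff]
      rw [Ddiff_congr l (G := fun b => (((F (Function.update b i 1) -
            F (Function.update b i 0) : ℤ)) : R)) (fun b => by push_cast; ring)]
      exact Ddiff_cast l _ b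

/-- 0/1-valued lift of an affine function over `𝔽₂`. -/
def Aff (g : (Fin n → ZMod 2) → ℤ) : Prop :=
  ∃ (w : Fin n → ZMod 2) (c0 : ZMod 2),
    ∀ b, g b = (((∑ ℓ, w ℓ * b ℓ) + c0).val : ℤ)

lemma aff_const_zero : Aff (fun _ : Fin n → ZMod 2 => (0 : ℤ)) := by
  refine ⟨0, 0, fun b => by simp⟩

lemma zmod2_val_add (y z : ZMod 2) :
    (((y + z).val : ℤ)) = (y.val : ℤ) + z.val - 2 * (y.val * z.val) := by
  revert y z; decide

lemma zmod2_val_add_one (y : ZMod 2) : (((y + 1).val : ℤ)) = 1 - (y.val : ℤ) := by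
  revert y; decide

/-- Product of `(1 - 2 g)` over a list of `Aff` functions is again `1 - 2 G`
with `G` an `Aff` function. -/
lemma aff_prod_one_sub_two :
    ∀ (gs : List ((Fin n → ZMod 2) → ℤ)), (∀ g ∈ gs, Aff g) →
      ∃ G, Aff G ∧ ∀ b, (gs.map (fun g => 1 - 2 * g b)).prod = 1 - 2 * G b
  | [], _ => ⟨_, aff_const_zero, fun b => by simp⟩
  | g :: gs, h => by
      obtain ⟨G, ⟨w2, c2, hG⟩, hprod⟩ :=
        aff_prod_one_sub_two gs (fun x hx => h x (List.mem_cons_of_mem _ hx))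
      obtain ⟨w1, c1, hg⟩ := h g (List.mem_cons_self)
      refine ⟨fun b => (((∑ ℓ, (w1 ℓ + w2 ℓ) * b ℓ) + (c1 + c2)).val : ℤ),
        ⟨_, _, fun b => rfl⟩, fun b => ?_⟩
      have e : (∑ ℓ, (w1 ℓ + w2 ℓ) * b ℓ) + (c1 + c2)
          = ((∑ ℓ, w1 ℓ * b ℓ) + c1) + ((∑ ℓ, w2 ℓ * b ℓ) + c2) := by
        simp [add_mul, Finset.sum_add_distrib]; ring
      rw [List.map_cons, List.prod_cons, hprod, hg]
      show _ = 1 - 2 * ((((∑ ℓ, (w1 ℓ + w2 ℓ) * b ℓ) + (c1 + c2)).val : ℕ) : ℤ)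
      rw [hG, e, zmod2_val_add ((∑ ℓ, w1 ℓ * b ℓ) + c1) ((∑ ℓ, w2 ℓ * b ℓ) + c2)]
      ring

/-- An `Aff` function composed with setting coordinate `i` to `0`. -/
lemma aff_update_zero {g : (Fin n → ZMod 2) → ℤ} (hg : Aff g) (i : Fin n) :
    Aff (fun b => g (Function.update b i 0)) := by
  obtain ⟨w, c0, hgw⟩ := hg
  refine ⟨Function.update w i 0, c0, fun b => ?_⟩
  show g (Function.update b i 0) = _
  have hsum : ∑ ℓ, w ℓ * Function.update b i 0 ℓ
      = ∑ ℓ, Function.update w i 0 ℓ * b ℓ := by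
    apply Finset.sum_congr rfl
    intro ℓ _
    rcases eq_or_ne ℓ i with rfl | hne
    · simp
    · simp [Function.update_of_ne hne]
  rw [hgw, hsum]

/-- The value of an `Aff` function at `b[i := 1]` in terms of `b[i := 0]`. -/
lemma aff_update_one {g : (Fin n → ZMod 2) → ℤ} (hg : Aff g) (i : Fin n) :
    ∃ ε : ℤ, (ε = 0 ∨ ε = 1) ∧ ∀ b,
      g (Function.update b i 1) =
        g (Function.update b i 0) + ε * (1 - 2 * g (Function.update b i 0)) := by
  obtain ⟨w, c0, hgw⟩ := hg
  refine ⟨((w i).val : ℤ), by have := ZMod.val_lt (w i); omega, fun b => ?_⟩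
  have key : ∀ x : ZMod 2, (∑ ℓ, w ℓ * (Function.update b i x) ℓ) + c0
      = ((∑ ℓ, w ℓ * (Function.update b i 0) ℓ) + c0) + w i * x := by
    intro x
    have h2 : ∀ x : ZMod 2, (∑ ℓ, w ℓ * (Function.update b i x) ℓ)
        = (∑ ℓ ∈ Finset.univ.erase i, w ℓ * b ℓ) + w i * x := by
      intro x
      rw [← Finset.add_sum_erase _ _ (Finset.mem_univ i)]
      simp only [Function.update_self, add_comm]
      congr 1
      apply Finset.sum_congr rfl
      intro ℓ hℓ
      rw [Function.update_of_ne (Finset.ne_of_mem_erase hℓ)]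
    rw [h2 x, h2 0]; ring
  rw [hgw, hgw, key 1, key 0]
  have h01 : ∀ y : ZMod 2, y = 0 ∨ y = 1 := by decide
  rcases h01 (w i) with h0 | h1
  · simp [h0]
  · rw [h1]
    have hv1 : (((1 : ZMod 2)).val : ℤ) = 1 := rfl
    rw [mul_one, mul_zero, add_zero, zmod2_val_add_one, hv1]
    ring

lemma Ddiff_add {R : Type} [CommRing R] :
    ∀ (l : List (Fin n)) (F G : (Fin n → ZMod 2) → R) (b),
      Ddiff l (fun b => F b + G b) b = Ddiff l F b + Ddiff l G b
  | [], F, G, b => rfl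
  | i :: l, F, G, b => by
      simp only [Ddiff]
      rw [Ddiff_congr l (G := fun b =>
            (F (Function.update b i 1) - F (Function.update b i 0)) +
            (G (Function.update b i 1) - G (Function.update b i 0)))
          (fun b => by ring)]
      exact Ddiff_add l _ _ b

lemma Ddiff_list_sum {R : Type} [CommRing R] (l : List (Fin n)) {α : Type} :
    ∀ (ts : List α) (f : α → (Fin n → ZMod 2) → R) (b),
      Ddiff l (fun b => (ts.map (fun t => f t b)).sum) b
        = (ts.map (fun t => Ddiff l (f t) b)).sum
  | [], f, b => by simpa using Ddiff_zero l b
  | t :: ts, f, b => by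
      rw [Ddiff_congr l
          (G := fun b => f t b + (ts.map (fun t => f t b)).sum) (fun b => by simp)]
      rw [Ddiff_add, Ddiff_list_sum l ts f b]
      simp

lemma list_sum_mul_left {α : Type} (l : List α) (c : ℤ) (f : α → ℤ) :
    (l.map (fun a => c * f a)).sum = c * (l.map f).sum := by
  induction l with
  | nil => simp
  | cons a l ih => simp [ih, mul_add]

/-- Certificate for a term `e * ∏ hs` appearing in the expansion of a first
difference of a product of `m` affine 0/1 functions. -/
def TermOK (m : ℕ) (t : ℤ × List ((Fin n → ZMod 2) → ℤ)) : Prop :=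
  (∀ g ∈ t.2, Aff g) ∧
    ∀ L : ℕ, (2 : ℤ) ^ (L + 1 - m) ∣ t.1 * 2 ^ (L - t.2.length)

/-- Expansion of the first difference of a product of affine 0/1 functions into
terms with divisibility certificates. -/
lemma expand (i : Fin n) :
    ∀ (gs : List ((Fin n → ZMod 2) → ℤ)), (∀ g ∈ gs, Aff g) →
      ∃ ts : List (ℤ × List ((Fin n → ZMod 2) → ℤ)),
        (∀ t ∈ ts, TermOK gs.length t) ∧
        ∀ b, (gs.map (fun g => g (Function.update b i 1))).prod
            - (gs.map (fun g => g (Function.update b i 0))).prod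
          = (ts.map (fun t => t.1 * (t.2.map (fun g => g b)).prod)).sum := by
  intro gs
  induction gs with
  | nil => exact fun _ => ⟨[], by simp, by simp⟩
  | cons g gs' ih =>
    intro hgs
    obtain ⟨ts', hOK', heq'⟩ := ih (fun x hx => hgs x (List.mem_cons_of_mem _ hx))
    have hgAff : Aff g := hgs g (List.mem_cons_self)
    obtain ⟨ε, hε01, hεval⟩ := aff_update_one hgAff i
    set g0 : (Fin n → ZMod 2) → ℤ := fun b => g (Function.update b i 0) with hg0
    set gs'0 : List ((Fin n → ZMod 2) → ℤ) :=
      gs'.map (fun h => fun b => h (Function.update b i 0)) with hgs'0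
    have hg0Aff : Aff g0 := aff_update_zero hgAff i
    have hgs'0Aff : ∀ h ∈ gs'0, Aff h := by
      intro h hh
      simp only [hgs'0, List.mem_map] at hh
      obtain ⟨h', hh', rfl⟩ := hh
      exact aff_update_zero (hgs h' (List.mem_cons_of_mem _ hh')) i
    have hgs'0len : gs'0.length = gs'.length := List.length_map _
    refine ⟨(ε, gs'0) :: (-(2 * ε), g0 :: gs'0) ::
        (ts'.map (fun t => (t.1, g0 :: t.2)) ++ ts'.map (fun t => (ε * t.1, t.2))
          ++ ts'.map (fun t => (-(2 * ε * t.1), g0 :: t.2))), ?_, ?_⟩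
    · intro t ht
      have hm : (g :: gs').length = gs'.length + 1 := rfl
      simp only [List.mem_cons, List.mem_append, List.mem_map] at ht
      rcases ht with rfl | rfl | ((⟨t', ht', rfl⟩ | ⟨t', ht', rfl⟩) | ⟨t', ht', rfl⟩)
      · refine ⟨hgs'0Aff, fun L => ?_⟩
        have e1 : L + 1 - (g :: gs').length = L - gs'0.length := by
          rw [hm, hgs'0len]; omega
        rw [e1]
        exact dvd_mul_left _ _
      · refine ⟨?_, fun L => ?_⟩
        · intro h hh
          rcases List.mem_cons.mp hh with rfl | hh
          · exact hg0Aff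
          · exact hgs'0Aff h hh
        · show (2:ℤ) ^ (L + 1 - (g :: gs').length) ∣
            -(2 * ε) * 2 ^ (L - (g0 :: gs'0).length)
          have e2 : -(2 * ε) * (2:ℤ) ^ (L - (g0 :: gs'0).length)
              = -ε * 2 ^ (L - (g0 :: gs'0).length + 1) := by ring
          rw [e2]
          exact Dvd.dvd.mul_left
            (pow_dvd_pow 2 (by simp only [hm, List.length_cons, hgs'0len]; omega)) _
      · obtain ⟨haff', hdvd'⟩ := hOK' t' ht'
        refine ⟨?_, fun L => ?_⟩
        · intro h hh
          rcases List.mem_cons.mp hh with rfl | hh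
          · exact hg0Aff
          · exact haff' h hh
        · show (2:ℤ) ^ (L + 1 - (g :: gs').length) ∣ t'.1 * 2 ^ (L - (g0 :: t'.2).length)
          rcases L with _ | L''
          · simp [hm]
          · have e3 : L'' + 1 + 1 - (g :: gs').length = L'' + 1 - gs'.length := by
              rw [hm]; omega
            have e4 : L'' + 1 - (g0 :: t'.2).length = L'' - t'.2.length := by
              simp only [List.length_cons]; omega
            rw [e3, e4]
            exact hdvd' L''
      · obtain ⟨haff', hdvd'⟩ := hOK' t' ht'
        refine ⟨haff', fun L => ?_⟩
        show (2:ℤ) ^ (L + 1 - (g :: gs').length) ∣ ε * t'.1 * 2 ^ (L - t'.2.length)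
        have h1 : (2:ℤ) ^ (L + 1 - (g :: gs').length) ∣ 2 ^ (L + 1 - gs'.length) :=
          pow_dvd_pow 2 (by rw [hm]; omega)
        have h2 := hdvd' L
        have e5 : ε * t'.1 * (2:ℤ) ^ (L - t'.2.length)
            = ε * (t'.1 * 2 ^ (L - t'.2.length)) := by ring
        rw [e5]
        exact Dvd.dvd.mul_left (dvd_trans h1 h2) ε
      · obtain ⟨haff', hdvd'⟩ := hOK' t' ht'
        refine ⟨?_, fun L => ?_⟩
        · intro h hh
          rcases List.mem_cons.mp hh with rfl | hh
          · exact hg0Aff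
          · exact haff' h hh
        · show (2:ℤ) ^ (L + 1 - (g :: gs').length) ∣
            -(2 * ε * t'.1) * 2 ^ (L - (g0 :: t'.2).length)
          rcases L with _ | L''
          · simp [hm]
          · have e3 : L'' + 1 + 1 - (g :: gs').length = L'' + 1 - gs'.length := by
              rw [hm]; omega
            have e4 : L'' + 1 - (g0 :: t'.2).length = L'' - t'.2.length := by
              simp only [List.length_cons]; omega
            have e6 : -(2 * ε * t'.1) * (2:ℤ) ^ (L'' - t'.2.length)
                = (-(2 * ε)) * (t'.1 * 2 ^ (L'' - t'.2.length)) := by ring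
            rw [e3, e4, e6]
            exact Dvd.dvd.mul_left (hdvd' L'') _
    · intro b
      have hQ0 : (gs'.map (fun h => h (Function.update b i 0))).prod
          = (gs'0.map (fun h => h b)).prod := by
        rw [hgs'0, List.map_map]; rfl
      have hD := heq' b
      set D : ℤ := (ts'.map (fun t => t.1 * (t.2.map (fun g => g b)).prod)).sum with hDdef
      have hQ1 : (gs'.map (fun h => h (Function.update b i 1))).prod
          = (gs'0.map (fun h => h b)).prod + D := by
        rw [← hQ0]; linarith [hD]
      have hgval : g (Function.update b i 1) = g0 b + ε * (1 - 2 * g0 b) := hεval b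
      simp only [List.map_cons, List.prod_cons, List.map_append, List.sum_append,
        List.sum_cons, List.map_map]
      rw [hgval, hQ1, hQ0]
      have h3 : (ts'.map (fun t => t.1 * (g0 b * (t.2.map (fun g => g b)).prod))).sum
          = g0 b * D := by
        rw [show (fun t : ℤ × List ((Fin n → ZMod 2) → ℤ) =>
              t.1 * (g0 b * (t.2.map (fun g => g b)).prod))
            = fun t => g0 b * (t.1 * (t.2.map (fun g => g b)).prod) from
          funext fun t => by ring, list_sum_mul_left, hDdef]
      have h4 : (ts'.map (fun t => ε * t.1 * (t.2.map (fun g => g b)).prod)).sum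
          = ε * D := by
        rw [show (fun t : ℤ × List ((Fin n → ZMod 2) → ℤ) =>
              ε * t.1 * (t.2.map (fun g => g b)).prod)
            = fun t => ε * (t.1 * (t.2.map (fun g => g b)).prod) from
          funext fun t => by ring, list_sum_mul_left, hDdef]
      have h5 : (ts'.map (fun t =>
            -(2 * ε * t.1) * (g0 b * (t.2.map (fun g => g b)).prod))).sum
          = -(2 * ε) * (g0 b * D) := by
        rw [show (fun t : ℤ × List ((Fin n → ZMod 2) → ℤ) =>
              -(2 * ε * t.1) * (g0 b * (t.2.map (fun g => g b)).prod))
            = fun t => (-(2 * ε) * g0 b) * (t.1 * (t.2.map (fun g => g b)).prod) from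
          funext fun t => by ring, list_sum_mul_left, hDdef]
        ring
      have c3 : ((fun t : ℤ × List ((Fin n → ZMod 2) → ℤ) =>
            t.1 * (List.map (fun g => g b) t.2).prod) ∘
            (fun t : ℤ × List ((Fin n → ZMod 2) → ℤ) => (t.1, g0 :: t.2)))
          = fun t => t.1 * (g0 b * (t.2.map (fun g => g b)).prod) :=
        funext fun t => by simp [Function.comp]
      have c4 : ((fun t : ℤ × List ((Fin n → ZMod 2) → ℤ) =>
            t.1 * (List.map (fun g => g b) t.2).prod) ∘
            (fun t : ℤ × List ((Fin n → ZMod 2) → ℤ) => (ε * t.1, t.2)))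
          = fun t => ε * t.1 * (t.2.map (fun g => g b)).prod :=
        funext fun t => by simp [Function.comp]
      have c5 : ((fun t : ℤ × List ((Fin n → ZMod 2) → ℤ) =>
            t.1 * (List.map (fun g => g b) t.2).prod) ∘
            (fun t : ℤ × List ((Fin n → ZMod 2) → ℤ) => (-(2 * ε * t.1), g0 :: t.2)))
          = fun t => -(2 * ε * t.1) * (g0 b * (t.2.map (fun g => g b)).prod) :=
        funext fun t => by simp [Function.comp]
      rw [c3, c4, c5, h3, h4, h5,
        show g (Function.update b i 0) = g0 b from rfl]
      ring

/-- Key divisibility: iterated differences of a product of `m` affine 0/1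
functions along `l` are divisible by `2^(|l| - m)`. -/
lemma key (l : List (Fin n)) :
    ∀ (gs : List ((Fin n → ZMod 2) → ℤ)), (∀ g ∈ gs, Aff g) → ∀ b,
      (2 : ℤ) ^ (l.length - gs.length) ∣
        Ddiff l (fun b => (gs.map (fun g => g b)).prod) b := by
  induction l with
  | nil =>
    intro gs _ b
    have e : ([] : List (Fin n)).length - gs.length = 0 := by simp
    rw [e, pow_zero]
    exact one_dvd _
  | cons i l ih =>
    intro gs hgs b
    obtain ⟨ts, hOK, heq⟩ := expand i gs hgs
    simp only [Ddiff]
    rw [Ddiff_congr l (G := fun b =>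
        (ts.map (fun t => t.1 * (t.2.map (fun g => g b)).prod)).sum)
      (fun b => heq b) b]
    rw [Ddiff_list_sum]
    apply List.dvd_sum
    intro x hx
    simp only [List.mem_map] at hx
    obtain ⟨t, ht, rfl⟩ := hx
    rw [Ddiff_const_mul]
    obtain ⟨haff, hdvd⟩ := hOK t ht
    obtain ⟨u, hu⟩ := ih t.2 haff b
    rw [hu]
    obtain ⟨v, hv⟩ := hdvd l.length
    refine ⟨v * u, ?_⟩
    rw [List.length_cons]
    calc t.1 * (2 ^ (l.length - t.2.length) * u)
        = (t.1 * 2 ^ (l.length - t.2.length)) * u := by ring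
      _ = ((2:ℤ) ^ (l.length + 1 - gs.length) * v) * u := by rw [hv]
      _ = _ := by ring

/-- The multilinear monomial `∏_{j ∈ γ} x_j` as a function of bits. -/
def Mono {R : Type} [CommRing R] (γ : Finset (Fin n)) (b : Fin n → ZMod 2) : R :=
  ∏ j ∈ γ, ((b j).val : R)

lemma Ddiff_mono {R : Type} [CommRing R] :
    ∀ (l : List (Fin n)), l.Nodup → ∀ (γ : Finset (Fin n)) (b),
      Ddiff l (Mono (R := R) γ) b
        = if l.toFinset ⊆ γ then Mono (γ \ l.toFinset) b else 0
  | [], _, γ, b => by simp [Ddiff]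
  | i :: l, hnd, γ, b => by
    have hi : i ∉ l := (List.nodup_cons.mp hnd).1
    have hl : l.Nodup := (List.nodup_cons.mp hnd).2
    simp only [Ddiff]
    by_cases hmem : i ∈ γ
    · have hstep : ∀ b, Mono (R := R) γ (Function.update b i 1)
          - Mono γ (Function.update b i 0) = Mono (γ.erase i) b := by
        intro b
        have hsub : ∀ x : ZMod 2, Mono (R := R) (γ.erase i) (Function.update b i x)
            = Mono (γ.erase i) b := by
          intro x
          apply Finset.prod_congr rfl
          intro j hj
          rw [Function.update_of_ne (Finset.ne_of_mem_erase hj)]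
        have h1 : Mono (R := R) γ (Function.update b i 1)
            = ((Function.update b i (1:ZMod 2) i).val : R)
              * Mono (γ.erase i) (Function.update b i 1) :=
          (Finset.mul_prod_erase γ _ hmem).symm
        have h0 : Mono (R := R) γ (Function.update b i 0)
            = ((Function.update b i (0:ZMod 2) i).val : R)
              * Mono (γ.erase i) (Function.update b i 0) :=
          (Finset.mul_prod_erase γ _ hmem).symm
        rw [h1, h0, hsub, hsub]
        have e1 : ((1 : ZMod 2)).val = 1 := rfl
        have e0 : ((0 : ZMod 2)).val = 0 := rfl
        rw [Function.update_self, Function.update_self, e1, e0]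
        push_cast
        ring
      rw [Ddiff_congr l (G := Mono (γ.erase i)) (fun b => hstep b) b,
        Ddiff_mono l hl (γ.erase i) b]
      have hc : l.toFinset ⊆ γ.erase i ↔ (i :: l).toFinset ⊆ γ := by
        simp only [List.toFinset_cons, Finset.insert_subset_iff,
          Finset.subset_erase]
        constructor
        · rintro ⟨h1, _⟩; exact ⟨hmem, h1⟩
        · rintro ⟨_, h2⟩; exact ⟨h2, by simpa using hi⟩
      by_cases hsub : l.toFinset ⊆ γ.erase i
      · rw [if_pos hsub, if_pos (hc.mp hsub)]
        congr 1
        ext j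
        simp only [Finset.mem_sdiff, Finset.mem_erase, List.toFinset_cons,
          Finset.mem_insert, List.mem_toFinset]
        tauto
      · rw [if_neg hsub, if_neg (fun h => hsub (hc.mpr h))]
    · have hstep : ∀ b, Mono (R := R) γ (Function.update b i 1)
          - Mono γ (Function.update b i 0) = 0 := by
        intro b
        have hsub : ∀ x : ZMod 2, Mono (R := R) γ (Function.update b i x)
            = Mono γ b := by
          intro x
          apply Finset.prod_congr rfl
          intro j hj
          have hne : j ≠ i := fun h => hmem (by rwa [h] at hj)
          rw [Function.update_of_ne hne]
        rw [hsub, hsub, sub_self]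
      rw [Ddiff_congr l (G := fun _ => 0) (fun b => hstep b) b, Ddiff_zero]
      rw [if_neg]
      intro h
      exact hmem (h (by simp))

end SubstW

open SubstW in
/-- Conjugation by an invertible affine map `x ↦ Bx ⊕ c` of `𝔽₂ⁿ` preserves the
set `W` of multilinear polynomials over `ℤ_{2^k}` with zero constant term and
`α`-coefficient divisible by `2^{|α|-1}`, up to discarding the constant term:
if `p ∈ W` and `q` is the multilinear form of `x ↦ p(Bx ⊕ c)`, then every
nonconstant degree-`t` coefficient of `q` is divisible by `2^{t-1}`. -/
theorem substitution_preserves_W (n k : ℕ)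
    (B : Matrix (Fin n) (Fin n) (ZMod 2)) (hB : IsUnit B)
    (c : Fin n → ZMod 2)
    (p q : Finset (Fin n) → ZMod (2 ^ k))
    (hp0 : p ∅ = 0)
    (hpdiv : ∀ α : Finset (Fin n), α.Nonempty →
      p α ∈ AddSubgroup.zmultiples ((2 : ZMod (2 ^ k)) ^ (α.card - 1)))
    (hq : ∀ b : Fin n → ZMod 2, evalP n k q b = evalP n k p (B.mulVec b + c)) :
    ∀ α : Finset (Fin n), α.Nonempty →
      q α ∈ AddSubgroup.zmultiples ((2 : ZMod (2 ^ k)) ^ (α.card - 1)) := by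
  classical
  intro α hα
  -- integer lifts of the coefficients of `p`
  set z : Finset (Fin n) → ℤ := fun γ =>
    if h : γ.Nonempty then (hpdiv γ h).choose * 2 ^ (γ.card - 1) else 0 with hzdef
  have hz_cast : ∀ γ, ((z γ : ℤ) : ZMod (2 ^ k)) = p γ := by
    intro γ
    by_cases h : γ.Nonempty
    · simp only [hzdef, dif_pos h]
      have e : (((hpdiv γ h).choose * 2 ^ (γ.card - 1) : ℤ) : ZMod (2 ^ k))
          = ((hpdiv γ h).choose : ℤ) • ((2 : ZMod (2 ^ k)) ^ (γ.card - 1)) := by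
        rw [zsmul_eq_mul]
        push_cast
        ring
      rw [e]
      exact (hpdiv γ h).choose_spec
    · simp only [hzdef, dif_neg h]
      rw [Finset.not_nonempty_iff_eq_empty] at h
      simp [h, hp0]
  have hz_dvd : ∀ γ : Finset (Fin n), γ.Nonempty → (2:ℤ) ^ (γ.card - 1) ∣ z γ := by
    intro γ h
    simp only [hzdef, dif_pos h]
    exact dvd_mul_left _ _
  have hz_empty : z ∅ = 0 := by simp [hzdef]
  -- the affine 0/1 coordinate functions
  set hfun : Fin n → (Fin n → ZMod 2) → ℤ :=
    fun j b => (((B.mulVec b + c) j).val : ℤ) with hhfun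
  have haff : ∀ j, Aff (hfun j) := by
    intro j
    refine ⟨fun ℓ => B j ℓ, c j, fun b => ?_⟩
    show (((B.mulVec b + c) j).val : ℤ) = _
    have hco : (B.mulVec b + c) j = (∑ ℓ, B j ℓ * b ℓ) + c j := by
      simp [Matrix.mulVec, dotProduct]
    rw [hco]
  -- the integer lift of `p ∘ (affine map)`
  set F : (Fin n → ZMod 2) → ℤ := fun b =>
    ∑ γ : Finset (Fin n), z γ *
      ((γ.toList.map hfun).map (fun g => g b)).prod with hFdef
  have hcard : 1 ≤ α.card := hα.card_pos
  -- divisibility of the iterated difference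
  have hDdvd : (2:ℤ) ^ (α.card - 1) ∣ Ddiff α.toList F (fun _ => 0) := by
    have esum : Ddiff α.toList F (fun _ => 0)
        = ∑ γ : Finset (Fin n), Ddiff α.toList
            (fun b => z γ * ((γ.toList.map hfun).map (fun g => g b)).prod)
            (fun _ => 0) := by
      rw [hFdef]
      exact Ddiff_sum _ _ _ _
    rw [esum]
    apply Finset.dvd_sum
    intro γ _
    rw [Ddiff_const_mul α.toList (z γ)
      (fun b => ((γ.toList.map hfun).map (fun g => g b)).prod) (fun _ => 0)]
    by_cases hγ : γ.Nonempty
    · have haffγ : ∀ g ∈ γ.toList.map hfun, Aff g := by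
        intro g hg
        simp only [List.mem_map] at hg
        obtain ⟨j, _, rfl⟩ := hg
        exact haff j
      obtain ⟨u, hu⟩ := key α.toList (γ.toList.map hfun) haffγ (fun _ => 0)
      have hE : α.toList.length - (γ.toList.map hfun).length
          = α.card - γ.card := by
        rw [List.length_map, Finset.length_toList, Finset.length_toList]
      rw [hE] at hu
      obtain ⟨v, hv⟩ := hz_dvd γ hγ
      have hγpos : 1 ≤ γ.card := hγ.card_pos
      have hineq : α.card - 1 ≤ (γ.card - 1) + (α.card - γ.card) := by
        clear * - hγpos
        omega
      have h2 : (2:ℤ) ^ (α.card - 1) ∣ 2 ^ ((γ.card - 1) + (α.card - γ.card)) :=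
        pow_dvd_pow 2 hineq
      obtain ⟨w, hw⟩ := h2
      rw [pow_add] at hw
      rw [hu, hv]
      refine ⟨w * (v * u), ?_⟩
      calc (2:ℤ) ^ (γ.card - 1) * v * (2 ^ (α.card - γ.card) * u)
          = ((2:ℤ) ^ (γ.card - 1) * 2 ^ (α.card - γ.card)) * (v * u) := by ring
        _ = ((2:ℤ) ^ (α.card - 1) * w) * (v * u) := by rw [hw]
        _ = _ := by ring
    · rw [Finset.not_nonempty_iff_eq_empty] at hγ
      simp [hγ, hz_empty]
  -- identification of the iterated difference with `q α`
  have hid : ((Ddiff α.toList F (fun _ => 0) : ℤ) : ZMod (2 ^ k)) = q α := by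
    have hFc : ∀ b, ((F b : ℤ) : ZMod (2 ^ k)) = evalP n k q b := by
      intro b
      rw [hq b]
      have hFb : F b = ∑ γ : Finset (Fin n), z γ * ∏ j ∈ γ, hfun j b := by
        rw [hFdef]
        apply Finset.sum_congr rfl
        intro γ _
        rw [List.map_map]
        congr 1
        exact Finset.prod_map_toList _ _
      rw [hFb]
      push_cast
      simp only [evalP]
      apply Finset.sum_congr rfl
      intro γ _
      rw [hz_cast]
      congr 1
      apply Finset.prod_congr rfl
      intro j _
      simp [hhfun]
    have e1 : ((Ddiff α.toList F (fun _ => 0) : ℤ) : ZMod (2 ^ k))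
        = Ddiff α.toList (fun b => ∑ γ : Finset (Fin n), q γ * Mono γ b)
            (fun _ => 0) := by
      rw [← Ddiff_cast]
      apply Ddiff_congr
      intro b
      rw [hFc b]
      rfl
    rw [e1]
    have e2 : Ddiff α.toList (fun b => ∑ γ : Finset (Fin n), q γ * Mono γ b)
          (fun _ => 0)
        = ∑ γ : Finset (Fin n), Ddiff α.toList (fun b => q γ * Mono γ b)
            (fun _ => 0) := Ddiff_sum _ _ _ _
    rw [e2]
    have hterm : ∀ γ : Finset (Fin n),
        Ddiff α.toList (fun b => q γ * Mono γ b) (fun _ => 0)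
          = q γ * (if α.toList.toFinset ⊆ γ
              then Mono (γ \ α.toList.toFinset) (fun _ => 0) else 0) := by
      intro γ
      rw [Ddiff_const_mul α.toList (q γ) (Mono γ) (fun _ => 0),
        Ddiff_mono _ (Finset.nodup_toList α)]
    rw [Finset.sum_congr rfl (fun γ _ => hterm γ)]
    have htf : α.toList.toFinset = α := Finset.toList_toFinset α
    rw [Finset.sum_congr rfl (fun γ _ => by rw [htf])]
    rw [Finset.sum_eq_single α]
    · rw [if_pos (Finset.Subset.refl α), Finset.sdiff_self]
      simp [Mono]
    · intro γ _ hne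
      by_cases hsub : α ⊆ γ
      · rw [if_pos hsub]
        have hnonempty : (γ \ α).Nonempty := by
          rw [Finset.sdiff_nonempty]
          intro hle
          exact hne (Finset.Subset.antisymm hle hsub)
        obtain ⟨j, hj⟩ := hnonempty
        have : Mono (R := ZMod (2 ^ k)) (γ \ α) (fun _ => 0) = 0 := by
          apply Finset.prod_eq_zero hj
          simp [ZMod.val_zero]
        rw [this, mul_zero]
      · rw [if_neg hsub, mul_zero]
    · intro h
      exact absurd (Finset.mem_univ α) h
  -- conclude
  obtain ⟨u, hu⟩ := hDdvd
  rw [AddSubgroup.mem_zmultiples_iff]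
  refine ⟨u, ?_⟩
  rw [← hid, hu, zsmul_eq_mul]
  push_cast
  ring
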